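/- arXiv:1704.03149 — 2 statements merged into one kernel-verified Lean document; each statement's English description precedes it below -/
import Mathlib

section
/- For a convex polytope Δ ⊂ R^3 and a point v ∉ Δ, the radial (central) projection from v of the union of faces of Δ visible from v onto a plane W separating v from Δ is a convex polygon. -/
open MeasureTheory Set

noncomputable section

private lemma exists_visible {E : Type*} [NormedAddCommGroup E] [NormedSpace ℝ E]
    {Δ : Set E} (hcl : IsClosed Δ) {v y : E} (hv : v ∉ Δ) (hy : y ∈ Δ) :
    ∃ t₀ : ℝ, 0 < t₀ ∧ t₀ ≤ 1 ∧ v + t₀ • (y - v) ∈ Δ ∧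
      segment ℝ (v + t₀ • (y - v)) v ∩ Δ = {v + t₀ • (y - v)} := by
  set T : Set ℝ := Icc (0:ℝ) 1 ∩ (fun t => v + t • (y - v)) ⁻¹' Δ with hT
  have h1 : (1:ℝ) ∈ T := ⟨⟨zero_le_one, le_refl 1⟩, by simpa using hy⟩
  have hTne : T.Nonempty := ⟨1, h1⟩
  have hTcl : IsClosed T := isClosed_Icc.inter (hcl.preimage (by continuity))
  have hTbdd : BddBelow T := ⟨0, fun t ht => ht.1.1⟩
  set t₀ := sInf T with ht₀def
  have hmem : t₀ ∈ T := hTcl.csInf_mem hTne hTbdd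
  have ht₀0 : 0 ≤ t₀ := hmem.1.1
  have ht₀1 : t₀ ≤ 1 := hmem.1.2
  have ht₀ne : t₀ ≠ 0 := by
    intro h
    apply hv
    have h2 := hmem.2
    simp only [mem_preimage, h, zero_smul, add_zero] at h2
    exact h2
  refine ⟨t₀, lt_of_le_of_ne ht₀0 (Ne.symm ht₀ne), ht₀1, hmem.2, ?_⟩
  ext z
  simp only [mem_inter_iff, mem_singleton_iff]
  constructor
  · rintro ⟨hzseg, hzΔ⟩
    rw [segment_eq_image'] at hzseg
    obtain ⟨θ, hθ, rfl⟩ := hzseg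
    beta_reduce at hzΔ ⊢
    have hrw : v + t₀ • (y - v) + θ • (v - (v + t₀ • (y - v)))
        = v + ((1 - θ) * t₀) • (y - v) := by module
    rw [hrw] at hzΔ ⊢
    have hu : (1 - θ) * t₀ ∈ T := by
      refine ⟨⟨mul_nonneg (by linarith [hθ.2]) ht₀0, ?_⟩, hzΔ⟩
      calc (1 - θ) * t₀ ≤ 1 * t₀ := by
            apply mul_le_mul_of_nonneg_right _ ht₀0; linarith [hθ.1]
        _ ≤ 1 := by rw [one_mul]; exact ht₀1
    have hle : t₀ ≤ (1 - θ) * t₀ := csInf_le hTbdd hu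
    have hge : (1 - θ) * t₀ ≤ t₀ := by
      calc (1 - θ) * t₀ ≤ 1 * t₀ := by
            apply mul_le_mul_of_nonneg_right _ ht₀0; linarith [hθ.1]
        _ = t₀ := one_mul _
    rw [le_antisymm hge hle]
  · rintro rfl
    exact ⟨left_mem_segment ℝ _ _, hmem.2⟩

private lemma proj_mem_hull {E : Type*} [NormedAddCommGroup E] [NormedSpace ℝ E]
    (f : E →L[ℝ] ℝ) (c : ℝ) (v : E) (s : Set E)
    (hposs : ∀ x ∈ s, 0 < f x - f v) {y : E} (hy : y ∈ convexHull ℝ s)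
    (hposy : 0 < f y - f v) :
    v + ((c - f v)/(f y - f v)) • (y - v) ∈
      convexHull ℝ ((fun x => v + ((c - f v)/(f x - f v)) • (x - v)) '' s) := by
  rw [convexHull_eq] at hy
  obtain ⟨ι, t, w, z, hw0, hw1, hz, hcm⟩ := hy
  have hcm' : ∑ i ∈ t, w i • z i = y := by
    rw [← Finset.centerMass_eq_of_sum_1 t z hw1, hcm]
  set b : ι → ℝ := fun i => w i * (f (z i) - f v) with hb
  have hb0 : ∀ i ∈ t, 0 ≤ b i := fun i hi =>
    mul_nonneg (hw0 i hi) (le_of_lt (hposs _ (hz i hi)))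
  have hfy : f y = ∑ i ∈ t, w i * f (z i) := by
    rw [← hcm']
    simp [map_sum, _root_.map_smul, smul_eq_mul]
  have hbsum : ∑ i ∈ t, b i = f y - f v := by
    simp only [hb, mul_sub]
    rw [Finset.sum_sub_distrib, ← Finset.sum_mul, hw1, hfy, one_mul]
  have hkey : t.centerMass b (fun i => v + ((c - f v)/(f (z i) - f v)) • (z i - v))
      = v + ((c - f v)/(f y - f v)) • (y - v) := by
    rw [Finset.centerMass]
    rw [hbsum]
    have hsum : ∑ i ∈ t, b i • (v + ((c - f v)/(f (z i) - f v)) • (z i - v))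
        = (f y - f v) • v + (c - f v) • (y - v) := by
      have heach : ∀ i ∈ t, b i • (v + ((c - f v)/(f (z i) - f v)) • (z i - v))
          = b i • v + ((c - f v) * w i) • (z i - v) := by
        intro i hi
        have hne : f (z i) - f v ≠ 0 := ne_of_gt (hposs _ (hz i hi))
        rw [smul_add, smul_smul, hb]
        congr 2
        field_simp
      rw [Finset.sum_congr rfl heach, Finset.sum_add_distrib, ← Finset.sum_smul, hbsum]
      congr 1
      have h1 : ∑ i ∈ t, ((c - f v) * w i) • (z i - v)
          = (c - f v) • (∑ i ∈ t, w i • (z i - v)) := by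
        rw [Finset.smul_sum]
        exact Finset.sum_congr rfl fun i _ => (smul_smul _ _ _).symm
      have h2 : ∑ i ∈ t, w i • (z i - v) = y - v := by
        simp only [smul_sub]
        rw [Finset.sum_sub_distrib, hcm', ← Finset.sum_smul, hw1, one_smul]
      rw [h1, h2]
    rw [hsum]
    have hne : f y - f v ≠ 0 := ne_of_gt hposy
    rw [smul_add, smul_smul, smul_smul, inv_mul_cancel₀ hne, one_smul, inv_mul_eq_div]
  rw [← hkey]
  exact Finset.centerMass_mem_convexHull t hb0 (by rw [hbsum]; exact hposy)
    (fun i hi => ⟨z i, hz i hi, rfl⟩)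


/-- the radial projection from `v` of the union of the faces of a convex
polytope `Δ` visible from `v ∉ Δ`, onto a plane `W = {f = c}` separating `v` from `Δ`,
is a convex polygon (the convex hull of finitely many points). A point `x` of `Δ` is
visible from `v` if the segment `[x, v]` meets `Δ` only in `x`. -/
theorem planar_projection_of_visible_convex (s : Set (EuclideanSpace ℝ (Fin 3)))
    (hs : s.Finite) (Δ : Set (EuclideanSpace ℝ (Fin 3))) (hΔ : Δ = convexHull ℝ s)
    (hnd : volume Δ ≠ 0)
    (v : EuclideanSpace ℝ (Fin 3)) (hv : v ∉ Δ)
    (f : EuclideanSpace ℝ (Fin 3) →L[ℝ] ℝ) (c : ℝ)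
    (hsep₁ : f v < c) (hsep₂ : ∀ x ∈ Δ, c < f x)
    (Vis : Set (EuclideanSpace ℝ (Fin 3)))
    (hVis : Vis = {x | x ∈ Δ ∧ segment ℝ x v ∩ Δ = {x}})
    (Pr : Set (EuclideanSpace ℝ (Fin 3)))
    (hPr : Pr = {w | f w = c ∧ ∃ y ∈ Vis, ∃ t : ℝ, w = v + t • (y - v)}) :
    Convex ℝ Pr ∧ ∃ u : Set (EuclideanSpace ℝ (Fin 3)), u.Finite ∧ Pr = convexHull ℝ u := by
  have hΔcl : IsClosed Δ := hΔ ▸ hs.isClosed_convexHull (𝕜 := ℝ)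
  have hΔconv : Convex ℝ Δ := hΔ ▸ convex_convexHull ℝ s
  have hsub : s ⊆ Δ := hΔ ▸ subset_convexHull ℝ s
  have hpos : ∀ y ∈ Δ, 0 < f y - f v := fun y hy => sub_pos.2 (hsep₁.trans (hsep₂ y hy))
  have hcv : 0 < c - f v := sub_pos.2 hsep₁
  have hf : ∀ (t : ℝ) (y : EuclideanSpace ℝ (Fin 3)),
      f (v + t • (y - v)) = f v + t * (f y - f v) := by
    intro t y
    simp only [map_add, _root_.map_smul, map_sub, smul_eq_mul]
  -- Q: the cone description of Pr
  set Q : Set (EuclideanSpace ℝ (Fin 3)) :=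
    {w | f w = c ∧ ∃ y ∈ Δ, ∃ t : ℝ, 0 ≤ t ∧ w = v + t • (y - v)} with hQ
  have hPrQ : Pr = Q := by
    rw [hPr, hQ]
    ext w
    simp only [mem_setOf_eq]
    constructor
    · rintro ⟨hw, y, hyV, t, rfl⟩
      rw [hVis] at hyV
      obtain ⟨hyΔ, -⟩ := hyV
      refine ⟨hw, y, hyΔ, t, ?_, rfl⟩
      have h1 : f v + t * (f y - f v) = c := by rw [← hf t y]; exact hw
      have h2 : t * (f y - f v) = c - f v := by linarith
      by_contra hlt
      push_neg at hlt
      nlinarith [hpos y hyΔ]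
    · rintro ⟨hw, y, hyΔ, t, ht0, rfl⟩
      obtain ⟨t₀, ht₀pos, ht₀1, hy'Δ, hy'vis⟩ := exists_visible hΔcl hv hyΔ
      refine ⟨hw, v + t₀ • (y - v), ?_, t / t₀, ?_⟩
      · rw [hVis]; exact ⟨hy'Δ, hy'vis⟩
      · rw [show v + t₀ • (y - v) - v = t₀ • (y - v) by abel,
          smul_smul, div_mul_cancel₀ _ (ne_of_gt ht₀pos)]
  -- Q is convex
  have hQconv : Convex ℝ Q := by
    rintro w₁ ⟨hw₁, y₁, hy₁, t₁, ht₁, rfl⟩ w₂ ⟨hw₂, y₂, hy₂, t₂, ht₂, rfl⟩ a b ha hb hab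
    have hfc : f (a • (v + t₁ • (y₁ - v)) + b • (v + t₂ • (y₂ - v))) = c := by
      simp only [map_add, _root_.map_smul, smul_eq_mul, hw₁, hw₂]
      linear_combination c * hab
    refine ⟨hfc, ?_⟩
    have hcomb : a • (v + t₁ • (y₁ - v)) + b • (v + t₂ • (y₂ - v))
        = v + (a * t₁) • (y₁ - v) + (b * t₂) • (y₂ - v) := by
      have hb' : b = 1 - a := by linarith
      subst hb'
      module
    rcases eq_or_lt_of_le (le_of_eq (rfl : (0:ℝ) = 0) |>.trans
        (add_nonneg (mul_nonneg ha ht₁) (mul_nonneg hb ht₂))) with hT | hT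
    ·
      have h1 : a * t₁ = 0 := by nlinarith [mul_nonneg ha ht₁, mul_nonneg hb ht₂]
      have h2 : b * t₂ = 0 := by nlinarith [mul_nonneg ha ht₁, mul_nonneg hb ht₂]
      refine ⟨y₁, hy₁, 0, le_refl 0, ?_⟩
      rw [hcomb, h1, h2]
      module
    · set T := a * t₁ + b * t₂ with hTdef
      refine ⟨(a * t₁ / T) • y₁ + (b * t₂ / T) • y₂, ?_, T, le_of_lt hT, ?_⟩
      · apply hΔconv hy₁ hy₂ (div_nonneg (mul_nonneg ha ht₁) (le_of_lt hT))
          (div_nonneg (mul_nonneg hb ht₂) (le_of_lt hT))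
        field_simp
        exact hTdef.symm
      · rw [hcomb]
        have hTne : T ≠ 0 := ne_of_gt hT
        have e1 : a * t₁ / T * T = a * t₁ := div_mul_cancel₀ _ hTne
        have e2 : b * t₂ / T * T = b * t₂ := div_mul_cancel₀ _ hTne
        match_scalars <;> field_simp <;> ring
  -- the finite set of projected vertices
  set π : EuclideanSpace ℝ (Fin 3) → EuclideanSpace ℝ (Fin 3) :=
    fun x => v + ((c - f v)/(f x - f v)) • (x - v) with hπ
  have hmain : Pr = convexHull ℝ (π '' s) := by
    apply le_antisymm
    · intro w hw
      rw [hPrQ] at hw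
      obtain ⟨hwc, y, hyΔ, t, ht0, rfl⟩ := hw
      have h1 : f v + t * (f y - f v) = c := by rw [← hf t y]; exact hwc
      have ht : t = (c - f v) / (f y - f v) := by
        field_simp [ne_of_gt (hpos y hyΔ)]
        linarith
      rw [ht]
      exact proj_mem_hull f c v s (fun x hx => hpos x (hsub hx)) (hΔ ▸ hyΔ) (hpos y hyΔ)
    · rw [hPrQ]
      apply convexHull_min _ hQconv
      rintro w ⟨x, hx, rfl⟩
      refine ⟨?_, x, hsub hx, (c - f v)/(f x - f v),
        div_nonneg (le_of_lt hcv) (le_of_lt (hpos x (hsub hx))), rfl⟩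
      rw [hf]
      field_simp [ne_of_gt (hpos x (hsub hx))]
      ring
  refine ⟨?_, π '' s, hs.image π, hmain⟩
  rw [hPrQ]
  exact hQconv
end
end

section
/- Let R^d be partitioned into finitely many polyhedral cells D_i with pairwise disjoint interiors, with convex functions F_i : D_i → R agreeing on intersections, defining a continuous function F : R^d → R. If for every point v in the common boundary of two cells D_i, D_j (but in no third cell) and every ω ≠ 0 with v − ω ∈ D_i and v + ω ∈ D_j there exists t ∈ (0,1) with F(v) ≤ (F_i(v − tω) + F_j(v + tω))/2, then F is convex on R^d. Moreover if each F_i is strictly convex then F is strictly convex. -/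
open Set
open Filter Module
open scoped Topology

section PasteAuxiliary

open Filter Module
open scoped Topology

/-- 1-D criterion: continuous function with local weak midpoint property on an
interval satisfies the chord inequality. -/
lemma paste_oneD {g : ℝ → ℝ} (hg : Continuous g) {x y : ℝ} (hxy : x < y)
    (hloc : ∀ t ∈ Ioo x y, ∀ ε > 0, ∃ h ∈ Ioo (0:ℝ) ε,
      g t ≤ (g (t - h) + g (t + h)) / 2)
    {p q : ℝ} (hp : 0 ≤ p) (hq : 0 ≤ q) (hpq : p + q = 1) :
    g (p * x + q * y) ≤ p * g x + q * g y := by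
  have hyx : (0:ℝ) < y - x := by linarith
  set L : ℝ → ℝ := fun s => g x + (s - x) / (y - x) * (g y - g x) with hLdef
  have hLx : L x = g x := by simp [hLdef]
  have hLy : L y = g y := by
    simp only [hLdef]
    rw [div_self (ne_of_gt hyx)]; ring
  have hLcont : Continuous L := by
    apply continuous_const.add
    exact (((continuous_id.sub continuous_const).div_const _).mul continuous_const)
  set φ : ℝ → ℝ := fun s => g s - L s with hφdef
  have hφcont : Continuous φ := hg.sub hLcont
  obtain ⟨x₀, hx₀mem, hx₀max⟩ := isCompact_Icc.exists_isMaxOn (nonempty_Icc.2 hxy.le)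
    hφcont.continuousOn
  have hmax : ∀ s ∈ Icc x y, φ s ≤ φ x₀ := fun s hs => hx₀max hs
  have hpq' : p = 1 - q := by linarith
  have e1 : p * x + q * y - x = q * (y - x) := by rw [hpq']; ring
  have e2 : y - (p * x + q * y) = p * (y - x) := by rw [hpq']; ring
  have hzmem : p * x + q * y ∈ Icc x y := by
    constructor
    · nlinarith [mul_nonneg hq hyx.le]
    · nlinarith [mul_nonneg hp hyx.le]
  have hLz : L (p * x + q * y) = p * g x + q * g y := by
    simp only [hLdef, e1]
    rw [mul_div_assoc, div_self (ne_of_gt hyx)]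
    rw [hpq']; ring
  by_cases hM : φ x₀ ≤ 0
  · have := hmax _ hzmem
    have : φ (p * x + q * y) ≤ 0 := le_trans this hM
    simp only [hφdef] at this
    linarith [hLz ▸ this]
  · exfalso
    push_neg at hM
    set S := {s : ℝ | s ∈ Icc x y ∧ φ s = φ x₀} with hSdef
    have hSclosed : IsClosed S := by
      have : S = Icc x y ∩ φ ⁻¹' {φ x₀} := by ext s; simp [hSdef]
      rw [this]
      exact isClosed_Icc.inter (isClosed_singleton.preimage hφcont)
    have hSne : S.Nonempty := ⟨x₀, hx₀mem, rfl⟩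
    have hSbdd : BddAbove S := ⟨y, fun s hs => hs.1.2⟩
    set s₀ := sSup S with hs₀def
    have hs₀S : s₀ ∈ S := hSclosed.csSup_mem hSne hSbdd
    have hφx : φ x = 0 := by simp [hφdef, hLx]
    have hφy : φ y = 0 := by simp [hφdef, hLy]
    have hs₀x : s₀ ≠ x := fun h => by rw [h] at hs₀S; rw [hs₀S.2] at hφx; linarith
    have hs₀y : s₀ ≠ y := fun h => by rw [h] at hs₀S; rw [hs₀S.2] at hφy; linarith
    have hs₀Ioo : s₀ ∈ Ioo x y :=
      ⟨lt_of_le_of_ne hs₀S.1.1 (Ne.symm hs₀x), lt_of_le_of_ne hs₀S.1.2 hs₀y⟩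
    have hεpos : 0 < min (s₀ - x) (y - s₀) := by
      simp only [lt_min_iff]; exact ⟨by linarith [hs₀Ioo.1], by linarith [hs₀Ioo.2]⟩
    obtain ⟨h, hh, hkey⟩ := hloc s₀ hs₀Ioo _ hεpos
    have hh1 : 0 < h := hh.1
    have hh2 : h < s₀ - x := lt_of_lt_of_le hh.2 (min_le_left _ _)
    have hh3 : h < y - s₀ := lt_of_lt_of_le hh.2 (min_le_right _ _)
    have hLmid : L s₀ = (L (s₀ - h) + L (s₀ + h)) / 2 := by
      simp only [hLdef]
      field_simp
      ring
    have hφineq : φ s₀ ≤ (φ (s₀ - h) + φ (s₀ + h)) / 2 := by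
      simp only [hφdef]; linarith [hkey, hLmid]
    have hm1 : φ (s₀ - h) ≤ φ x₀ := hmax _ ⟨by linarith, by linarith [hs₀S.1.2]⟩
    have hm2 : φ (s₀ + h) ≤ φ x₀ := hmax _ ⟨by linarith [hs₀S.1.1], by linarith⟩
    have : φ (s₀ + h) = φ x₀ := by
      have h2 := hs₀S.2
      clear_value L φ S s₀
      linarith
    have : s₀ + h ∈ S := ⟨⟨by linarith [hs₀S.1.1], by linarith⟩, this⟩
    have := le_csSup hSbdd this
    linarith


section
variable {E : Type*} [NormedAddCommGroup E] [NormedSpace ℝ E]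

/-- Along any ray from `v`, some cell contains an initial closed segment. -/
lemma paste_ray {m : ℕ} (D : Fin m → Set E) (hconv : ∀ i, Convex ℝ (D i))
    (hcl : ∀ i, IsClosed (D i)) (hcov : ∀ z : E, ∃ i, z ∈ D i) (v ω : E) :
    ∃ i, ∃ s > (0:ℝ), ∀ h ∈ Icc (0:ℝ) s, v + h • ω ∈ D i := by
  choose idx hidx using fun n : ℕ => hcov (v + (1 / (n + 1) : ℝ) • ω)
  have hfib : ∃ i, {n : ℕ | idx n = i}.Infinite := by
    by_contra hcon
    push_neg at hcon
    have huniv : (Set.univ : Set ℕ) = ⋃ i, {n | idx n = i} := by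
      ext n; simp
    have : (Set.univ : Set ℕ).Finite := by
      rw [huniv]; exact Set.finite_iUnion hcon
    exact Set.infinite_univ this
  obtain ⟨i, hi⟩ := hfib
  obtain ⟨n₀, hn₀⟩ := hi.nonempty
  refine ⟨i, 1 / (n₀ + 1), by positivity, ?_⟩
  set J := {h : ℝ | v + h • ω ∈ D i} with hJdef
  have hJconv : Convex ℝ J := by
    intro a ha b hb p q hp hq hpq
    have hq' : q = 1 - p := by linarith
    have hkey : v + (p * a + q * b) • ω = p • (v + a • ω) + q • (v + b • ω) := by
      rw [hq']; module
    show v + (p * a + q * b) • ω ∈ D i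
    rw [hkey]
    exact hconv i ha hb hp hq hpq
  have hJmem : ∀ n, idx n = i → (1 / (n + 1) : ℝ) ∈ J := by
    intro n hn
    have := hidx n
    rw [hn] at this
    exact this
  have hIoc : Ioc (0:ℝ) (1 / (n₀ + 1)) ⊆ J := by
    rintro h ⟨h0, hs⟩
    obtain ⟨n', hn', hgt⟩ := hi.exists_gt ⌈1 / h⌉₊
    have h1 : (1 / (n' + 1) : ℝ) ≤ h := by
      rw [div_le_iff₀ (by positivity)]
      have : (1 / h : ℝ) ≤ ⌈(1 / h : ℝ)⌉₊ := Nat.le_ceil _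
      have h2 : (⌈(1 / h : ℝ)⌉₊ : ℝ) ≤ n' := by exact_mod_cast hgt.le
      rw [div_le_iff₀ h0] at this
      nlinarith
    exact hJconv.ordConnected.out (hJmem n' hn') (hJmem n₀ hn₀) ⟨h1, hs⟩
  have hJclosed : IsClosed J := by
    have : J = (fun h : ℝ => v + h • ω) ⁻¹' (D i) := rfl
    rw [this]
    exact (hcl i).preimage (by continuity)
  intro h hh
  rcases eq_or_lt_of_le hh.1 with h0 | h0
  · have h0J : (0:ℝ) ∈ J := by
      have : (0:ℝ) ∈ closure (Ioc (0:ℝ) (1 / (n₀ + 1))) := by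
        rw [closure_Ioc (by positivity : (0:ℝ) ≠ 1 / (n₀+1))]
        exact ⟨le_refl _, by positivity⟩
      exact hJclosed.closure_subset ((closure_mono hIoc) this)
    rw [← h0]; exact h0J
  · exact hIoc ⟨h0, hh.2⟩

lemma paste_half_sep {s : Set E} (hs : Convex ℝ s) {f : E →L[ℝ] ℝ} {u : ℝ}
    (hne : (interior s).Nonempty) (hf : ∀ a ∈ interior s, f a < u) :
    ∀ z ∈ s, f z ≤ u := by
  intro z hz
  by_contra hcon
  push_neg at hcon
  obtain ⟨p, hp⟩ := hne
  have hfp : f p < u := hf p hp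
  set θ : ℝ := (u - f p) / (f z - f p) with hθdef
  have hd : 0 < f z - f p := by linarith
  have hθ0 : 0 < θ := div_pos (by linarith) hd
  have hθ1 : θ < 1 := (div_lt_one hd).2 (by linarith)
  have hmem : (1 - θ) • p + θ • z ∈ interior s :=
    hs.combo_interior_closure_mem_interior hp (subset_closure hz)
      (by linarith) (by linarith) (by ring)
  have := hf _ hmem
  rw [map_add, map_smul, map_smul] at this
  have hθv : θ * (f z - f p) = u - f p := by
    rw [hθdef]; field_simp
  simp only [smul_eq_mul] at this
  nlinarith
lemma paste_sep {s t : Set E} (hs : Convex ℝ s) (ht : Convex ℝ t)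
    (hsi : (interior s).Nonempty) (hti : (interior t).Nonempty)
    (hdisj : interior s ∩ interior t = ∅) :
    ∃ (f : E →L[ℝ] ℝ) (c : ℝ), f ≠ 0 ∧ (∀ z ∈ s, f z ≤ c) ∧ ∀ z ∈ t, c ≤ f z := by
  obtain ⟨f, u, hfs, hft⟩ := geometric_hahn_banach_open_open hs.interior isOpen_interior
    ht.interior isOpen_interior (Set.disjoint_iff_inter_eq_empty.2 hdisj)
  obtain ⟨a, ha⟩ := hsi
  obtain ⟨b, hb⟩ := hti
  have hfne : f ≠ 0 := by
    intro h
    rw [h] at hfs hft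
    simp only [ContinuousLinearMap.zero_apply] at hfs hft
    linarith [hfs a ha, hft b hb]
  refine ⟨f, u, hfne, paste_half_sep hs ⟨a, ha⟩ hfs, ?_⟩
  have hneg : ∀ z ∈ t, (-f) z ≤ -u :=
    paste_half_sep ht ⟨b, hb⟩ (fun a ha => by
      simp only [ContinuousLinearMap.neg_apply]; linarith [hft a ha])
  intro z hz
  have := hneg z hz
  simp only [ContinuousLinearMap.neg_apply] at this
  linarith


end

section
variable {E : Type*} [NormedAddCommGroup E] [NormedSpace ℝ E] [FiniteDimensional ℝ E]

/-- If two convex sets with disjoint interiors both lie in a halfspace `{g ≤ e}` and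
their intersection contains a convex set `C` lying in the bounding hyperplane whose
vector span is all of `ker g`, we get a contradiction. -/
lemma paste_cone {s t C : Set E} {g : E →L[ℝ] ℝ} {e : ℝ}
    (hs : Convex ℝ s) (ht : Convex ℝ t)
    (hdisj : interior s ∩ interior t = ∅)
    {p q : E} (hp : p ∈ interior s) (hq : q ∈ interior t)
    (hse : ∀ z ∈ s, g z ≤ e) (hte : ∀ z ∈ t, g z ≤ e)
    (hCs : C ⊆ s) (hCt : C ⊆ t) (hCconv : Convex ℝ C) (hCne : C.Nonempty)
    (hCe : ∀ z ∈ C, g z = e) (hker : vectorSpan ℝ C = LinearMap.ker (g : E →ₗ[ℝ] ℝ))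
    (hg : g ≠ 0) : False := by
  -- a vector with g v = 1
  obtain ⟨u₁, hu₁⟩ : ∃ u₁ : E, g u₁ ≠ 0 := by
    by_contra hcon; push_neg at hcon
    exact hg (by ext z; simpa using hcon z)
  set v : E := (g u₁)⁻¹ • u₁ with hvdef
  have hgv : g v = 1 := by
    simp [hvdef, map_smul, inv_mul_cancel₀ hu₁]
  have hvne : v ≠ 0 := fun h => by simp [h] at hgv
  -- strict inequality at interior points
  have hstrict : ∀ {w : E} {S : Set E}, w ∈ interior S → (∀ z ∈ S, g z ≤ e) → g w < e := by
    intro w S hw hSle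
    rcases Metric.isOpen_iff.1 isOpen_interior w hw with ⟨r, hr, hball⟩
    have hle : g w ≤ e := hSle w (interior_subset hw)
    rcases eq_or_lt_of_le hle with heq | hlt
    · exfalso
      set w' := w + (r / (2 * ‖v‖)) • v with hw'def
      have hvnorm : 0 < ‖v‖ := norm_pos_iff.2 hvne
      have hw' : w' ∈ interior S := by
        apply hball
        rw [Metric.mem_ball, hw'def, dist_eq_norm]
        simp only [add_sub_cancel_left, norm_smul, Real.norm_eq_abs]
        rw [abs_of_pos (by positivity)]
        have : r / (2 * ‖v‖) * ‖v‖ = r / 2 := by field_simp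
        rw [this]; linarith
      have := hSle w' (interior_subset hw')
      rw [hw'def, map_add, map_smul, smul_eq_mul, hgv, mul_one, heq] at this
      have : (0:ℝ) < r / (2 * ‖v‖) := by positivity
      linarith [hSle w' (interior_subset hw'), this]
    · exact hlt
  have hgp : g p < e := hstrict hp hse
  have hgq : g q < e := hstrict hq hte
  set α : ℝ := e - g p with hα
  set β : ℝ := e - g q with hβ
  have hα0 : 0 < α := by simp only [hα]; linarith
  have hβ0 : 0 < β := by simp only [hβ]; linarith
  clear_value α β
  -- intrinsic interior point of C with its relative ball
  obtain ⟨z₀', hz₀'⟩ := hCne.intrinsicInterior hCconv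
  rw [intrinsicInterior] at hz₀'
  obtain ⟨w₀', hw₀'int, hw₀'eq⟩ := hz₀'
  set z₀ : E := (w₀' : E) with hz₀def
  have hz₀C : z₀ ∈ C := Set.mem_preimage.1 (interior_subset hw₀'int)
  have hz₀e : g z₀ = e := hCe _ hz₀C
  obtain ⟨ε, hε0, hball⟩ := Metric.isOpen_iff.1 isOpen_interior w₀' hw₀'int
  -- relative ball fact
  have hrel : ∀ z : E, g z = e → dist z z₀ < ε → z ∈ C := by
    intro z hze hdist
    have hzmem : z ∈ affineSpan ℝ C := by
      have hdir : z -ᵥ z₀ ∈ (affineSpan ℝ C).direction := by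
        rw [direction_affineSpan, hker, LinearMap.mem_ker]
        simp [vsub_eq_sub, map_sub, hze, hz₀e]
      have := AffineSubspace.vadd_mem_of_mem_direction hdir
        (mem_affineSpan ℝ hz₀C)
      simpa using this
    set z' : affineSpan ℝ C := ⟨z, hzmem⟩ with hz'def
    have : z' ∈ Metric.ball w₀' ε := by
      rw [Metric.mem_ball, Subtype.dist_eq]
      exact hdist
    have := interior_subset (hball this)
    exact this
  -- the moving point construction
  set uf : ℝ → ℝ := fun τ => τ * α / β with hufdef
  set wf : ℝ → E := fun τ => z₀ + τ • (p - z₀) with hwfdef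
  set zf : ℝ → E := fun τ => wf τ + (uf τ / (1 - uf τ)) • (wf τ - q) with hzfdef
  have hu_tendsto : Tendsto uf (𝓝 0) (𝓝 0) := by
    have : Tendsto (fun τ : ℝ => τ * α / β) (𝓝 0) (𝓝 (0 * α / β)) := by
      exact ((continuous_id.mul continuous_const).div_const β).tendsto 0
    simpa using this
  have hw_tendsto : Tendsto wf (𝓝 0) (𝓝 z₀) := by
    have : Tendsto (fun τ : ℝ => z₀ + τ • (p - z₀)) (𝓝 0) (𝓝 (z₀ + (0:ℝ) • (p - z₀))) := by
      exact (continuous_const.add (continuous_id.smul continuous_const)).tendsto 0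
    simpa using this
  have hz_tendsto : Tendsto zf (𝓝 0) (𝓝 z₀) := by
    have hc : Tendsto (fun τ => uf τ / (1 - uf τ)) (𝓝 0) (𝓝 (0 / (1 - 0))) :=
      hu_tendsto.div (tendsto_const_nhds.sub hu_tendsto) (by norm_num)
    have : Tendsto zf (𝓝 0) (𝓝 (z₀ + (0 / (1 - 0) : ℝ) • (z₀ - q))) := by
      exact hw_tendsto.add (hc.smul (hw_tendsto.sub tendsto_const_nhds))
    simpa using this
  -- choose τ
  have hev1 : ∀ᶠ τ in 𝓝[>] (0:ℝ), uf τ < 1/2 := by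
    apply eventually_nhdsWithin_of_eventually_nhds
    exact hu_tendsto.eventually (eventually_lt_nhds (by norm_num : (0:ℝ) < 1/2))
  have hev2 : ∀ᶠ τ in 𝓝[>] (0:ℝ), dist (zf τ) z₀ < ε := by
    apply eventually_nhdsWithin_of_eventually_nhds
    have := hz_tendsto.eventually (Metric.eventually_nhds_iff_ball.2 ⟨ε, hε0, fun z hz => hz⟩)
    filter_upwards [this] with τ hτ
    exact Metric.mem_ball.1 hτ
  have hev3 : ∀ᶠ τ in 𝓝[>] (0:ℝ), τ < 1/2 := by
    apply eventually_nhdsWithin_of_eventually_nhds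
    exact eventually_lt_nhds (by norm_num)
  obtain ⟨τ, ⟨⟨hτu, hτd⟩, hτhalf⟩, hτpos⟩ :=
    (((hev1.and hev2).and hev3).and self_mem_nhdsWithin).exists
  have hτ0 : (0:ℝ) < τ := hτpos
  have hu0 : 0 < uf τ := by
    simp only [hufdef]
    exact div_pos (mul_pos hτ0 hα0) hβ0
  have h1u : 0 < 1 - uf τ := by linarith
  have hβτα : 0 < β - τ * α := by
    have h5 : τ * α / β < 1/2 := hτu
    rw [div_lt_iff₀ hβ0] at h5
    linarith
  -- g (zf τ) = e
  have hgw₀ : g (wf τ) = e - τ * α := by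
    simp only [hwfdef, map_add, map_smul, map_sub, smul_eq_mul, hz₀e, hα]
    ring
  have hgq' : g q = e - β := by simp [hβ]
  have hgz' : g (zf τ) = e := by
    simp only [hzfdef, map_add, map_smul, map_sub, smul_eq_mul, hgw₀, hgq', hufdef]
    have h6 : τ * α / β < 1/2 := hτu
    have hne1 : (1 : ℝ) - τ * α / β ≠ 0 := by
      rw [sub_ne_zero]
      intro hcon
      rw [← hcon] at h6
      norm_num at h6
    field_simp
    try ring
  have hz'C : zf τ ∈ C := hrel _ hgz' hτd
  -- wf τ ∈ interior s
  have hwiS : wf τ ∈ interior s := by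
    have hmem := hs.combo_interior_closure_mem_interior hp
      (subset_closure (hCs hz₀C)) hτ0 (by linarith : (0:ℝ) ≤ 1 - τ) (by ring)
    have hid : τ • p + (1 - τ) • z₀ = wf τ := by
      simp only [hwfdef]; module
    rwa [hid] at hmem
  -- wf τ ∈ interior t
  have hwiT : wf τ ∈ interior t := by
    have hmem := ht.combo_interior_closure_mem_interior hq
      (subset_closure (hCt hz'C)) hu0 (by linarith : (0:ℝ) ≤ 1 - uf τ) (by ring)
    have hkey : (1 - uf τ) * (uf τ / (1 - uf τ)) = uf τ := by
      field_simp
    have hid : uf τ • q + (1 - uf τ) • zf τ = wf τ := by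
      simp only [hzfdef]
      rw [smul_add, smul_smul, hkey]
      module
    rwa [hid] at hmem
  have hfin : wf τ ∈ interior s ∩ interior t := ⟨hwiS, hwiT⟩
  rw [hdisj] at hfin
  exact hfin

/-- kernel of a nonzero functional has corank one. -/
lemma paste_ker_rank {f : E →L[ℝ] ℝ} (hf : f ≠ 0) :
    finrank ℝ (LinearMap.ker (f : E →ₗ[ℝ] ℝ)) + 1 = finrank ℝ E := by
  obtain ⟨u, hu⟩ : ∃ u : E, f u ≠ 0 := by
    by_contra hcon; push_neg at hcon
    exact hf (by ext z; simpa using hcon z)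
  have hrange : LinearMap.range (f : E →ₗ[ℝ] ℝ) = ⊤ := by
    rw [Submodule.eq_top_iff']
    intro x
    have : x = (x * (f u)⁻¹) • ((f : E →ₗ[ℝ] ℝ) u) := by
      simp only [ContinuousLinearMap.coe_coe, smul_eq_mul]
      field_simp
    rw [this]
    exact Submodule.smul_mem _ _ (LinearMap.mem_range_self _ u)
  have := LinearMap.finrank_range_add_finrank_ker (f : E →ₗ[ℝ] ℝ)
  rw [hrange, finrank_top] at this
  simp only [finrank_self] at this
  have h2 : finrank ℝ (LinearMap.ker (f : E →ₗ[ℝ] ℝ)) = finrank ℝ (LinearMap.ker (f : E →ₗ[ℝ] ℝ)) := rfl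
  rw [h2]
  omega

/-- a hyperplane's worth of span inside the intersection of two cells forces
the kernels to agree. -/
lemma paste_vectorSpan_le_ker {C : Set E} {f : E →L[ℝ] ℝ} {c : ℝ}
    (hC : ∀ z ∈ C, f z = c) : vectorSpan ℝ C ≤ LinearMap.ker (f : E →ₗ[ℝ] ℝ) := by
  rw [vectorSpan_def, Submodule.span_le]
  rintro w ⟨z, hz, z', hz', rfl⟩
  simp only [SetLike.mem_coe, LinearMap.mem_ker, vsub_eq_sub, map_sub,
    ContinuousLinearMap.coe_coe]
  rw [hC z hz, hC z' hz', sub_self]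

/-- Key geometric fact: a triple intersection of cells has codimension at least two. -/
lemma paste_triple_small {s t r : Set E}
    (hs : Convex ℝ s) (ht : Convex ℝ t) (hr : Convex ℝ r)
    (hsi : (interior s).Nonempty) (hti : (interior t).Nonempty)
    (hri : (interior r).Nonempty)
    (hst : interior s ∩ interior t = ∅) (hsr : interior s ∩ interior r = ∅)
    (htr : interior t ∩ interior r = ∅) (hne : (s ∩ t ∩ r).Nonempty) :
    finrank ℝ (vectorSpan ℝ (s ∩ t ∩ r)) + 2 ≤ finrank ℝ E := by
  by_contra hcon
  push_neg at hcon
  set C := s ∩ t ∩ r with hCdef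
  have hCs : C ⊆ s := fun z hz => hz.1.1
  have hCt : C ⊆ t := fun z hz => hz.1.2
  have hCr : C ⊆ r := fun z hz => hz.2
  have hCconv : Convex ℝ C := (hs.inter ht).inter hr
  obtain ⟨z₀, hz₀⟩ := hne
  obtain ⟨f, c, hf0, hfs, hft⟩ := paste_sep hs ht hsi hti hst
  obtain ⟨f₂, c₂, hf₂0, hf₂s, hf₂r⟩ := paste_sep hs hr hsi hri hsr
  have hfC : ∀ z ∈ C, f z = c := fun z hz => le_antisymm (hfs z (hCs hz)) (hft z (hCt hz))
  have hf₂C : ∀ z ∈ C, f₂ z = c₂ := fun z hz =>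
    le_antisymm (hf₂s z (hCs hz)) (hf₂r z (hCr hz))
  -- vectorSpan C = ker f = ker f₂
  have hdim : finrank ℝ E ≤ finrank ℝ (vectorSpan ℝ C) + 1 := by omega
  have hkerf : vectorSpan ℝ C = LinearMap.ker (f : E →ₗ[ℝ] ℝ) := by
    apply Submodule.eq_of_le_of_finrank_le (paste_vectorSpan_le_ker hfC)
    have := paste_ker_rank hf0
    omega
  have hkerf₂ : vectorSpan ℝ C = LinearMap.ker (f₂ : E →ₗ[ℝ] ℝ) := by
    apply Submodule.eq_of_le_of_finrank_le (paste_vectorSpan_le_ker hf₂C)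
    have := paste_ker_rank hf₂0
    omega
  -- proportionality f₂ = λ f
  obtain ⟨u, hu⟩ : ∃ u : E, f u ≠ 0 := by
    by_contra hcon'; push_neg at hcon'
    exact hf0 (by ext z; simpa using hcon' z)
  set v : E := (f u)⁻¹ • u with hvdef
  have hfv : f v = 1 := by simp [hvdef, map_smul, inv_mul_cancel₀ hu]
  set lam : ℝ := f₂ v with hlam
  have hprop : ∀ z : E, f₂ z = lam * f z := by
    intro z
    have hker : z - (f z) • v ∈ LinearMap.ker (f : E →ₗ[ℝ] ℝ) := by
      rw [LinearMap.mem_ker]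
      simp only [ContinuousLinearMap.coe_coe, map_sub, map_smul, smul_eq_mul, hfv, mul_one, sub_self]
    rw [← hkerf, hkerf₂] at hker
    simp only [LinearMap.mem_ker, map_sub, map_smul, ContinuousLinearMap.coe_coe,
      smul_eq_mul] at hker
    rw [hlam]
    linarith [hker]
  have hlam0 : lam ≠ 0 := by
    intro h
    apply hf₂0
    ext z
    rw [hprop z, h, zero_mul]
    rfl
  have hc₂ : c₂ = lam * c := by
    have h1 := hfC z₀ hz₀
    have h2 := hf₂C z₀ hz₀
    rw [hprop z₀, h1] at h2
    exact h2.symm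
  obtain ⟨p, hp⟩ := hsi
  obtain ⟨q, hq⟩ := hti
  obtain ⟨w, hw⟩ := hri
  rcases lt_or_gt_of_ne hlam0 with hneg | hpos
  · -- lam < 0 : r ⊆ {f ≤ c}, pair (s, r)
    have hrle : ∀ z ∈ r, f z ≤ c := by
      intro z hz
      have h3 := hf₂r z hz
      rw [hprop z, hc₂] at h3
      by_contra hgt
      push_neg at hgt
      have := mul_lt_mul_of_neg_left hgt hneg
      linarith
    exact paste_cone hs hr hsr hp hw hfs hrle hCs hCr hCconv ⟨z₀, hz₀⟩ hfC
      hkerf hf0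
  · -- lam > 0 : r ⊆ {f ≥ c}, pair (t, r) with -f
    have hrge : ∀ z ∈ r, (-f) z ≤ -c := by
      intro z hz
      have := hf₂r z hz
      rw [hprop z, hc₂] at this
      simp only [ContinuousLinearMap.neg_apply, neg_le_neg_iff]
      nlinarith
    have htge : ∀ z ∈ t, (-f) z ≤ -c := by
      intro z hz
      simp only [ContinuousLinearMap.neg_apply, neg_le_neg_iff]
      exact hft z hz
    have hCneg : ∀ z ∈ C, (-f) z = -c := by
      intro z hz
      simp only [ContinuousLinearMap.neg_apply, neg_inj]
      exact hfC z hz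
    have hkerneg : vectorSpan ℝ C = LinearMap.ker ((-f : E →L[ℝ] ℝ) : E →ₗ[ℝ] ℝ) := by
      rw [hkerf]
      ext z
      simp [LinearMap.mem_ker, neg_eq_zero]
    exact paste_cone ht hr htr hq hw htge hrge hCt hCr hCconv ⟨z₀, hz₀⟩ hCneg
      hkerneg (neg_ne_zero.2 hf0)

lemma paste_insert_span_ne_top [Nontrivial E] {C : Set E}
    (hdim : C = ∅ ∨ finrank ℝ (vectorSpan ℝ C) + 2 ≤ finrank ℝ E) (x : E) :
    affineSpan ℝ (insert x C) ≠ ⊤ := by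
  intro htop
  have hdir : vectorSpan ℝ (insert x C) = ⊤ := by
    rw [← direction_affineSpan, htop, AffineSubspace.direction_top]
  rcases C.eq_empty_or_nonempty with hCe | ⟨z₀, hz₀⟩
  · rw [hCe] at hdir
    simp only [LawfulSingleton.insert_empty_eq] at hdir
    rw [vectorSpan_singleton] at hdir
    exact bot_ne_top hdir
  · rcases hdim with hCe | hdim
    · rw [hCe] at hz₀; exact hz₀
    have h1 : affineSpan ℝ (insert x C) =
        affineSpan ℝ (insert x ((affineSpan ℝ C : AffineSubspace ℝ E) : Set E)) := by
      rw [affineSpan_insert_affineSpan]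
    have h2 : (affineSpan ℝ (insert x C)).direction =
        Submodule.span ℝ {x -ᵥ z₀} ⊔ (affineSpan ℝ C).direction := by
      rw [h1]
      exact AffineSubspace.direction_affineSpan_insert (mem_affineSpan ℝ hz₀)
    rw [direction_affineSpan, hdir] at h2
    have h3 := Submodule.finrank_sup_add_finrank_inf_eq
      (Submodule.span ℝ {x -ᵥ z₀}) ((affineSpan ℝ C).direction)
    have h4 : finrank ℝ (Submodule.span ℝ ({x -ᵥ z₀} : Set E)) ≤ 1 := by
      rcases eq_or_ne (x -ᵥ z₀) 0 with h | h
      · rw [h, Submodule.span_zero_singleton]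
        simp
      · rw [finrank_span_singleton h]
    have h5 : finrank ℝ (affineSpan ℝ C).direction + 2 ≤ finrank ℝ E := by
      rw [direction_affineSpan]; exact hdim
    have h6 : finrank ℝ (⊤ : Submodule ℝ E) = finrank ℝ E := finrank_top ℝ E
    rw [← h2, h6] at h3
    omega

lemma paste_avoid {ι : Type*} [Finite ι] (A : ι → AffineSubspace ℝ E)
    (hA : ∀ l, A l ≠ ⊤) (x : E) {ε : ℝ} (hε : 0 < ε) :
    ∃ x' : E, dist x' x < ε ∧ ∀ l, x' ∉ A l := by
  have hint : ∀ l, interior ((A l : Set E)) = ∅ := by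
    intro l
    rw [← not_nonempty_iff_eq_empty]
    rintro ⟨y, hy⟩
    apply hA l
    rcases Metric.isOpen_iff.1 isOpen_interior y hy with ⟨r, hr, hball⟩
    have hyA : y ∈ A l := interior_subset hy
    apply SetLike.ext'
    rw [AffineSubspace.top_coe]
    ext z
    simp only [mem_univ, iff_true, SetLike.mem_coe]
    rcases eq_or_ne z y with rfl | hzy
    · exact hyA
    · have hzy' : (0:ℝ) < ‖z - y‖ := by
        rw [norm_pos_iff, sub_ne_zero]; exact hzy
      set δ : ℝ := r / (2 * ‖z - y‖) with hδdef
      have hδ0 : 0 < δ := by positivity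
      have hq : y + δ • (z - y) ∈ A l := by
        apply interior_subset
        apply hball
        rw [Metric.mem_ball, dist_eq_norm]
        simp only [add_sub_cancel_left, norm_smul, Real.norm_eq_abs, abs_of_pos hδ0]
        have : δ * ‖z - y‖ = r / 2 := by rw [hδdef]; field_simp
        rw [this]; linarith
      have hmem := AffineSubspace.smul_vsub_vadd_mem (A l) δ⁻¹ hq hyA hyA
      have hid : δ⁻¹ • ((y + δ • (z - y)) -ᵥ y) +ᵥ y = z := by
        simp only [vsub_eq_sub, vadd_eq_add, add_sub_cancel_left, smul_smul,
          inv_mul_cancel₀ (ne_of_gt hδ0), one_smul]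
        abel
      rwa [hid] at hmem
  have hclosed : ∀ l, IsClosed ((A l : Set E)) := fun l =>
    AffineSubspace.closed_of_finiteDimensional (A l)
  have hdense : Dense (⋂ l, ((A l : Set E))ᶜ) := by
    apply dense_iInter_of_isOpen
    · exact fun l => (hclosed l).isOpen_compl
    · intro l
      rw [← interior_eq_empty_iff_dense_compl]
      exact hint l
  obtain ⟨x', hx'mem, hx'ball⟩ := hdense.exists_mem_open Metric.isOpen_ball
    ⟨x, Metric.mem_ball_self hε⟩
  refine ⟨x', by rwa [← Metric.mem_ball], ?_⟩
  intro l hl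
  have := mem_iInter.1 hx'mem l
  exact this hl


end

lemma paste_affine_of_eq {g : ℝ → ℝ} (hg : ConvexOn ℝ univ g) {b : ℝ}
    (hb0 : 0 < b) (hb1 : b < 1) (heq : g b = (1 - b) * g 0 + b * g 1) :
    ∀ t, 0 ≤ t → t ≤ 1 → g t = (1 - t) * g 0 + t * g 1 := by
  have hch : ∀ t, 0 ≤ t → t ≤ 1 → g t ≤ (1 - t) * g 0 + t * g 1 := by
    intro t h0 h1
    have := hg.2 (mem_univ (0:ℝ)) (mem_univ (1:ℝ))
      (by linarith : (0:ℝ) ≤ 1 - t) h0 (by ring)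
    simpa using this
  intro t h0 h1
  rcases lt_trichotomy t b with hlt | herl | hgt
  · have h1t : (0:ℝ) < 1 - t := by linarith
    have hsum : (1 - b) / (1 - t) + (b - t) / (1 - t) = 1 := by
      field_simp
      ring
    have hpt : ((1 - b) / (1 - t)) • t + ((b - t) / (1 - t)) • (1:ℝ) = b := by
      simp only [smul_eq_mul]
      field_simp
      ring
    have key := hg.2 (mem_univ t) (mem_univ (1:ℝ))
      (div_nonneg (by linarith) h1t.le)
      (div_nonneg (by linarith) h1t.le) hsum
    rw [hpt] at key
    simp only [smul_eq_mul] at key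
    have hexp : (1 - t) * ((1 - b) / (1 - t) * g t + (b - t) / (1 - t) * g 1)
        = (1 - b) * g t + (b - t) * g 1 := by
      field_simp
    have h3 : (1 - t) * g b ≤ (1 - b) * g t + (b - t) * g 1 := by
      have := mul_le_mul_of_nonneg_left key h1t.le
      rwa [hexp] at this
    have h5 : (1 - t) * g b = (1 - t) * ((1 - b) * g 0 + b * g 1) := by rw [heq]
    have hring : (1 - b) * (g t - ((1 - t) * g 0 + t * g 1))
        = ((1 - b) * g t + (b - t) * g 1) - (1 - t) * ((1 - b) * g 0 + b * g 1) := by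
      ring
    have h4 : 0 ≤ (1 - b) * (g t - ((1 - t) * g 0 + t * g 1)) := by
      rw [hring]; linarith
    have hX : 0 ≤ g t - ((1 - t) * g 0 + t * g 1) := by
      by_contra hneg
      push_neg at hneg
      have := mul_neg_of_pos_of_neg (by linarith : (0:ℝ) < 1 - b) hneg
      linarith
    have := hch t h0 h1
    linarith
  · subst herl; exact heq
  · have ht0 : (0:ℝ) < t := by linarith
    have hsum : (t - b) / t + b / t = 1 := by field_simp; ring
    have hpt : ((t - b) / t) • (0:ℝ) + (b / t) • t = b := by
      simp only [smul_eq_mul]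
      field_simp
      ring
    have key := hg.2 (mem_univ (0:ℝ)) (mem_univ t)
      (div_nonneg (by linarith) ht0.le)
      (by positivity : (0:ℝ) ≤ b / t) hsum
    rw [hpt] at key
    simp only [smul_eq_mul] at key
    have hexp : t * ((t - b) / t * g 0 + b / t * g t) = (t - b) * g 0 + b * g t := by
      field_simp
    have h3 : t * g b ≤ (t - b) * g 0 + b * g t := by
      have := mul_le_mul_of_nonneg_left key ht0.le
      rwa [hexp] at this
    have h5 : t * g b = t * ((1 - b) * g 0 + b * g 1) := by rw [heq]
    have hring : b * (g t - ((1 - t) * g 0 + t * g 1))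
        = ((t - b) * g 0 + b * g t) - t * ((1 - b) * g 0 + b * g 1) := by
      ring
    have h4 : 0 ≤ b * (g t - ((1 - t) * g 0 + t * g 1)) := by
      rw [hring]; linarith
    have hX : 0 ≤ g t - ((1 - t) * g 0 + t * g 1) := by
      by_contra hneg
      push_neg at hneg
      have := mul_neg_of_pos_of_neg hb0 hneg
      linarith
    have := hch t h0 h1
    linarith


end PasteAuxiliary

noncomputable section

variable {d : ℕ}

/-- A polyhedral cell: a closed convex set with nonempty interior whose boundary is
contained in finitely many hyperplanes. -/
def IsPolyhedralCell (D : Set (EuclideanSpace ℝ (Fin d))) : Prop :=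
  Convex ℝ D ∧ IsClosed D ∧ (interior D).Nonempty ∧
    ∃ (k : ℕ) (f : Fin k → (EuclideanSpace ℝ (Fin d) →L[ℝ] ℝ)) (c : Fin k → ℝ),
      (∀ j, f j ≠ 0) ∧ frontier D ⊆ ⋃ j, {x | f j x = c j}

set_option maxHeartbeats 1000000 in
/-- pasting convex functions defined on a finite partition of `ℝ^d` into
polyhedral cells. If a continuous `F` is convex on each cell, and at every point `v` lying
in exactly two cells `D i`, `D j` the midpoint condition holds for every direction `ω`
crossing from `D i` to `D j`, then `F` is convex; if `F` is strictly convex on each cell,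
then `F` is strictly convex. -/
theorem paste_convex_on_polyhedral_cells (m : ℕ)
    (D : Fin m → Set (EuclideanSpace ℝ (Fin d)))
    (hcell : ∀ i, IsPolyhedralCell (D i))
    (hcover : (⋃ i, D i) = Set.univ)
    (hdisj : ∀ i j, i ≠ j → interior (D i) ∩ interior (D j) = ∅)
    (F : EuclideanSpace ℝ (Fin d) → ℝ) (hFcont : Continuous F)
    (hFconv : ∀ i, ConvexOn ℝ (D i) F)
    (hmid : ∀ i j, i ≠ j → ∀ v ∈ D i ∩ D j, (∀ k, k ≠ i → k ≠ j → v ∉ D k) →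
      ∀ ω : EuclideanSpace ℝ (Fin d), ω ≠ 0 → v - ω ∈ D i → v + ω ∈ D j →
        ∃ t ∈ Set.Ioo (0 : ℝ) 1, F v ≤ (F (v - t • ω) + F (v + t • ω)) / 2) :
    ConvexOn ℝ Set.univ F ∧
      ((∀ i, StrictConvexOn ℝ (D i) F) → StrictConvexOn ℝ Set.univ F) := by
  classical
  have hDconv : ∀ i, Convex ℝ (D i) := fun i => (hcell i).1
  have hDcl : ∀ i, IsClosed (D i) := fun i => (hcell i).2.1
  have hDint : ∀ i, (interior (D i)).Nonempty := fun i => (hcell i).2.2.1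
  have hcov : ∀ z : EuclideanSpace ℝ (Fin d), ∃ i, z ∈ D i := fun z =>
    mem_iUnion.1 (hcover ▸ mem_univ z)
  rcases subsingleton_or_nontrivial (EuclideanSpace ℝ (Fin d)) with hsub | hnt
  · constructor
    · refine ⟨convex_univ, ?_⟩
      intro x _ y _ a b ha hb hab
      have hxy : y = x := Subsingleton.elim _ _
      have h2 : a • x + b • y = x := Subsingleton.elim _ _
      rw [h2, hxy]
      simp only [smul_eq_mul]
      have h3 : a * F x + b * F x = F x := by rw [← add_mul, hab, one_mul]
      linarith
    · intro _
      refine ⟨convex_univ, ?_⟩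
      intro x _ y _ hxy
      exact absurd (Subsingleton.elim x y) hxy
  -- dimension bound for triple intersections
  have hspan : ∀ i j k : Fin m, i ≠ j → i ≠ k → j ≠ k →
      ∀ x : EuclideanSpace ℝ (Fin d),
      affineSpan ℝ (insert x (D i ∩ D j ∩ D k)) ≠ ⊤ := by
    intro i j k hij hik hjk x
    apply paste_insert_span_ne_top
    rcases (D i ∩ D j ∩ D k).eq_empty_or_nonempty with he | hne
    · exact Or.inl he
    · exact Or.inr (paste_triple_small (hDconv i) (hDconv j) (hDconv k) (hDint i)
        (hDint j) (hDint k) (hdisj i j hij) (hdisj i k hik) (hdisj j k hjk) hne)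
  -- chord inequality along triple-intersection-free segments
  have hkey : ∀ x y : EuclideanSpace ℝ (Fin d),
      (∀ i j k : Fin m, i ≠ j → i ≠ k → j ≠ k →
        ∀ z ∈ segment ℝ x y, ¬(z ∈ D i ∧ z ∈ D j ∧ z ∈ D k)) →
      ∀ a b : ℝ, 0 ≤ a → 0 ≤ b → a + b = 1 →
        F (a • x + b • y) ≤ a * F x + b * F y := by
    intro x y hGP a b ha hb hab
    rcases eq_or_ne y x with rfl | hne
    · have h2 : a • y + b • y = y := by rw [← add_smul, hab, one_smul]
      rw [h2]
      have h3 : a * F y + b * F y = F y := by rw [← add_mul, hab, one_mul]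
      linarith
    · set ω := y - x with hω
      have hω0 : ω ≠ 0 := sub_ne_zero.2 hne
      set g : ℝ → ℝ := fun t => F (x + t • ω) with hg
      have hgc : Continuous g :=
        hFcont.comp (continuous_const.add (continuous_id.smul continuous_const))
      have hloc : ∀ t ∈ Ioo (0:ℝ) 1, ∀ ε > 0, ∃ h ∈ Ioo (0:ℝ) ε,
          g t ≤ (g (t - h) + g (t + h)) / 2 := by
        intro t ht ε hε
        set v := x + t • ω with hv
        obtain ⟨j', s₁, hs₁, hj'⟩ := paste_ray D hDconv hDcl hcov v ω
        obtain ⟨i', s₂, hs₂, hi'⟩ := paste_ray D hDconv hDcl hcov v (-ω)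
        have hi'' : ∀ h ∈ Icc (0:ℝ) s₂, v - h • ω ∈ D i' := by
          intro h hh
          have := hi' h hh
          rwa [smul_neg, ← sub_eq_add_neg] at this
        set h₀ := min (min s₁ s₂) (ε/2) with hh₀
        have hh₀pos : 0 < h₀ := lt_min (lt_min hs₁ hs₂) (by linarith)
        have hh₀s₁ : h₀ ≤ s₁ := le_trans (min_le_left _ _) (min_le_left _ _)
        have hh₀s₂ : h₀ ≤ s₂ := le_trans (min_le_left _ _) (min_le_right _ _)
        have hh₀ε : h₀ < ε := lt_of_le_of_lt (min_le_right _ _) (by linarith)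
        have hgsub : ∀ h : ℝ, g (t - h) = F (v - h • ω) := by
          intro h
          simp only [hg, hv]
          congr 1
          rw [sub_smul]
          abel
        have hgadd : ∀ h : ℝ, g (t + h) = F (v + h • ω) := by
          intro h
          simp only [hg, hv]
          congr 1
          rw [add_smul]
          abel
        have hgt : g t = F v := rfl
        by_cases hij : i' = j'
        · subst hij
          refine ⟨h₀, ⟨hh₀pos, hh₀ε⟩, ?_⟩
          have hm1 : v - h₀ • ω ∈ D i' := hi'' h₀ ⟨hh₀pos.le, hh₀s₂⟩
          have hm2 : v + h₀ • ω ∈ D i' := hj' h₀ ⟨hh₀pos.le, hh₀s₁⟩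
          have hmid' := (hFconv i').2 hm1 hm2 (by norm_num : (0:ℝ) ≤ 1/2)
            (by norm_num : (0:ℝ) ≤ 1/2) (by norm_num)
          have hidv : (1/2 : ℝ) • (v - h₀ • ω) + (1/2 : ℝ) • (v + h₀ • ω) = v := by
            module
          rw [hidv] at hmid'
          rw [hgt, hgsub, hgadd]
          simp only [smul_eq_mul] at hmid'
          linarith
        · have hvi : v ∈ D i' := by
            have := hi'' 0 ⟨le_refl _, hs₂.le⟩
            simpa using this
          have hvj : v ∈ D j' := by
            have := hj' 0 ⟨le_refl _, hs₁.le⟩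
            simpa using this
          have hvseg : v ∈ segment ℝ x y := by
            rw [segment_eq_image']
            exact ⟨t, ⟨ht.1.le, ht.2.le⟩, rfl⟩
          have hthird : ∀ k, k ≠ i' → k ≠ j' → v ∉ D k := by
            intro k hki hkj hvk
            exact hGP i' j' k hij (Ne.symm hki) (Ne.symm hkj) v hvseg ⟨hvi, hvj, hvk⟩
          obtain ⟨t', ht', hineq⟩ := hmid i' j' hij v ⟨hvi, hvj⟩ hthird (h₀ • ω)
            (smul_ne_zero (ne_of_gt hh₀pos) hω0)
            (hi'' h₀ ⟨hh₀pos.le, hh₀s₂⟩) (hj' h₀ ⟨hh₀pos.le, hh₀s₁⟩)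
          refine ⟨t' * h₀, ⟨mul_pos ht'.1 hh₀pos, ?_⟩, ?_⟩
          · calc t' * h₀ < 1 * h₀ := by
                  apply mul_lt_mul_of_pos_right ht'.2 hh₀pos
              _ = h₀ := one_mul _
              _ < ε := hh₀ε
          · rw [hgt, hgsub, hgadd]
            have hsm : t' • (h₀ • ω) = (t' * h₀) • ω := smul_smul _ _ _
            rw [hsm] at hineq
            exact hineq
      have := paste_oneD hgc (by norm_num : (0:ℝ) < 1) hloc ha hb hab
      have hg0 : g 0 = F x := by simp [hg]
      have hg1 : g 1 = F y := by
        simp only [hg, one_smul, hω]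
        congr 1
        abel
      have hgb : g (a * 0 + b * 1) = F (a • x + b • y) := by
        simp only [hg, mul_zero, mul_one, zero_add]
        congr 1
        have ha' : a = 1 - b := by linarith
        rw [ha', hω]
        module
      rw [hgb, hg0, hg1] at this
      exact this
  -- convexity via perturbation of endpoints
  have hconv : ConvexOn ℝ Set.univ F := by
    refine ⟨convex_univ, ?_⟩
    intro x _ y _ a b ha hb hab
    have hseq : ∀ n : ℕ, ∃ x' y' : EuclideanSpace ℝ (Fin d),
        dist x' x < 1/(n+1) ∧ dist y' y < 1/(n+1) ∧
        F (a • x' + b • y') ≤ a * F x' + b * F y' := by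
      intro n
      have hn : (0:ℝ) < 1/(n+1) := by positivity
      set A : Fin m × Fin m × Fin m → AffineSubspace ℝ (EuclideanSpace ℝ (Fin d)) :=
        fun p => if p.1 ≠ p.2.1 ∧ p.1 ≠ p.2.2 ∧ p.2.1 ≠ p.2.2 then
          affineSpan ℝ (D p.1 ∩ D p.2.1 ∩ D p.2.2) else ⊥ with hA
      have hAne : ∀ p, A p ≠ ⊤ := by
        intro p
        simp only [hA]
        split_ifs with hd3
        · intro htop
          apply hspan p.1 p.2.1 p.2.2 hd3.1 hd3.2.1 hd3.2.2 x
          rw [eq_top_iff, ← htop]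
          exact affineSpan_mono ℝ (subset_insert _ _)
        · exact AffineSubspace.bot_ne_top ℝ (EuclideanSpace ℝ (Fin d))
            (EuclideanSpace ℝ (Fin d))
      obtain ⟨x', hx'd, hx'avoid⟩ := paste_avoid A hAne x hn
      set B : Fin m × Fin m × Fin m → AffineSubspace ℝ (EuclideanSpace ℝ (Fin d)) :=
        fun p => if p.1 ≠ p.2.1 ∧ p.1 ≠ p.2.2 ∧ p.2.1 ≠ p.2.2 then
          affineSpan ℝ (insert x' (D p.1 ∩ D p.2.1 ∩ D p.2.2)) else ⊥ with hB
      have hBne : ∀ p, B p ≠ ⊤ := by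
        intro p
        simp only [hB]
        split_ifs with hd3
        · exact hspan p.1 p.2.1 p.2.2 hd3.1 hd3.2.1 hd3.2.2 x'
        · exact AffineSubspace.bot_ne_top ℝ (EuclideanSpace ℝ (Fin d))
            (EuclideanSpace ℝ (Fin d))
      obtain ⟨y', hy'd, hy'avoid⟩ := paste_avoid B hBne y hn
      refine ⟨x', y', hx'd, hy'd, hkey x' y' ?_ a b ha hb hab⟩
      intro i j k hij hik hjk z hzseg hz3
      rw [segment_eq_image'] at hzseg
      obtain ⟨θ, hθ, rfl⟩ := hzseg
      have hzC : x' + θ • (y' - x') ∈ D i ∩ D j ∩ D k := ⟨⟨hz3.1, hz3.2.1⟩, hz3.2.2⟩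
      rcases eq_or_ne θ 0 with rfl | hθ0
      · apply hx'avoid (i, j, k)
        simp only [hA]
        rw [if_pos ⟨hij, hik, hjk⟩]
        apply subset_affineSpan
        simpa using hzC
      · apply hy'avoid (i, j, k)
        simp only [hB]
        rw [if_pos ⟨hij, hik, hjk⟩]
        have hzB : x' + θ • (y' - x') ∈ affineSpan ℝ
            (insert x' (D i ∩ D j ∩ D k)) :=
          subset_affineSpan _ _ (mem_insert_of_mem _ hzC)
        have hxB : x' ∈ affineSpan ℝ (insert x' (D i ∩ D j ∩ D k)) :=
          subset_affineSpan _ _ (mem_insert _ _)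
        have hmem := AffineSubspace.smul_vsub_vadd_mem _ θ⁻¹ hzB hxB hxB
        have hid : θ⁻¹ • ((x' + θ • (y' - x')) -ᵥ x') +ᵥ x' = y' := by
          simp only [vsub_eq_sub, vadd_eq_add, add_sub_cancel_left, smul_smul,
            inv_mul_cancel₀ hθ0, one_smul]
          abel
        rwa [hid] at hmem
    choose xs ys hxs hys hle using hseq
    have hlim : Tendsto (fun n : ℕ => 1/((n:ℝ)+1)) atTop (𝓝 0) :=
      tendsto_one_div_add_atTop_nhds_zero_nat
    have hx_t : Tendsto xs atTop (𝓝 x) := by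
      rw [tendsto_iff_dist_tendsto_zero]
      exact squeeze_zero (fun n => dist_nonneg) (fun n => (hxs n).le) hlim
    have hy_t : Tendsto ys atTop (𝓝 y) := by
      rw [tendsto_iff_dist_tendsto_zero]
      exact squeeze_zero (fun n => dist_nonneg) (fun n => (hys n).le) hlim
    have h1 : Tendsto (fun n => F (a • xs n + b • ys n)) atTop
        (𝓝 (F (a • x + b • y))) :=
      (hFcont.tendsto _).comp ((hx_t.const_smul a).add (hy_t.const_smul b))
    have h2 : Tendsto (fun n => a * F (xs n) + b * F (ys n)) atTop
        (𝓝 (a * F x + b * F y)) :=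
      ((((hFcont.tendsto x).comp hx_t).const_mul a)).add
        (((hFcont.tendsto y).comp hy_t).const_mul b)
    have := le_of_tendsto_of_tendsto' h1 h2 hle
    simpa [smul_eq_mul] using this
  refine ⟨hconv, ?_⟩
  -- strict convexity
  intro hstrict
  refine ⟨convex_univ, ?_⟩
  intro x _ y _ hxy a b ha hb hab
  have hle := hconv.2 (mem_univ x) (mem_univ y) ha.le hb.le hab
  rcases eq_or_lt_of_le hle with heq | hlt
  swap
  · exact hlt
  exfalso
  set ω := y - x with hω
  have hω0 : ω ≠ 0 := sub_ne_zero.2 (Ne.symm hxy)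
  set φ : ℝ →ᵃ[ℝ] EuclideanSpace ℝ (Fin d) := AffineMap.lineMap x y with hφ
  set g : ℝ → ℝ := F ∘ φ with hg
  have hgconv : ConvexOn ℝ Set.univ g := by
    have := hconv.comp_affineMap φ
    rwa [preimage_univ] at this
  have hφt : ∀ t : ℝ, φ t = x + t • ω := by
    intro t
    simp only [hφ, AffineMap.lineMap_apply, hω, vsub_eq_sub, vadd_eq_add]
    abel
  have hg0 : g 0 = F x := by simp [hg, hφt, hω]
  have hg1 : g 1 = F y := by
    simp only [hg, Function.comp_apply, hφt, one_smul, hω]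
    congr 1
    abel
  have hb1 : b < 1 := by linarith
  have ha' : a = 1 - b := by linarith
  have hgb : g b = F (a • x + b • y) := by
    simp only [hg, Function.comp_apply, hφt]
    congr 1
    rw [ha', hω]
    module
  have heq' : g b = (1 - b) * g 0 + b * g 1 := by
    rw [hgb, hg0, hg1, heq]
    simp only [smul_eq_mul]
    rw [ha']
  have haff := paste_affine_of_eq hgconv hb hb1 heq'
  -- find a cell containing a nondegenerate subsegment starting at φ b
  set v := x + b • ω with hv
  obtain ⟨i, s, hs, hray⟩ := paste_ray D hDconv hDcl hcov v ω
  set s' := min s ((1 - b)/2) with hs'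
  have hs'0 : 0 < s' := lt_min hs (by linarith)
  have hs'le : s' ≤ s := min_le_left _ _
  have hs'b : b + s' ≤ 1 := by
    have : s' ≤ (1 - b)/2 := min_le_right _ _
    linarith
  have hP1 : v ∈ D i := by
    have := hray 0 ⟨le_refl _, hs.le⟩
    simpa using this
  have hP2 : v + s' • ω ∈ D i := hray s' ⟨hs'0.le, hs'le⟩
  have hPne : v ≠ v + s' • ω := by
    intro hcon
    have : s' • ω = 0 := by
      have := hcon.symm
      rwa [add_eq_left] at this
    rcases smul_eq_zero.1 this with h | h
    · exact (ne_of_gt hs'0) h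
    · exact hω0 h
  have hstr := (hstrict i).2 hP1 hP2 hPne (by norm_num : (0:ℝ) < 1/2)
    (by norm_num : (0:ℝ) < 1/2) (by norm_num)
  have hmidpt : (1/2 : ℝ) • v + (1/2 : ℝ) • (v + s' • ω) = x + (b + s'/2) • ω := by
    simp only [hv]
    module
  rw [hmidpt] at hstr
  -- translate to g
  have hgv : ∀ u : ℝ, F (x + u • ω) = g u := by
    intro u
    simp only [hg, Function.comp_apply, hφt]
  have hFv : F v = g b := by rw [hv, hgv]
  have hFv2 : F (v + s' • ω) = g (b + s') := by
    rw [← hgv]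
    congr 1
    simp only [hv, add_smul]
    abel
  have hFm : F (x + (b + s'/2) • ω) = g (b + s'/2) := hgv _
  rw [hFm, hFv, hFv2] at hstr
  simp only [smul_eq_mul] at hstr
  have e1 := haff b hb.le (by linarith)
  have e2 := haff (b + s') (by linarith) hs'b
  have e3 := haff (b + s'/2) (by linarith) (by linarith)
  rw [e1, e2, e3] at hstr
  nlinarith [hstr]
end
end
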